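/- Let G be a connected graph on n vertices with Laplacian L, and let L_B = L·A where A is the n×(n-1) matrix with a_{ij} = 1 for i ≤ j ≤ n-1 and 0 otherwise. Then the absolute value of the determinant of the n×n matrix [L_B | 1] (L_B with a column of all ones appended) equals n·κ, where κ is the number of spanning trees of G. -/

import Mathlib

open Finset Matrix SimpleGraph

namespace MTaux

variable {V : Type*} [LinearOrder V]

/-- sign of an oriented edge -/
def esgn (a b : V) : ℤ := if a ≤ b then 1 else -1

/-- incidence vector entry -/
def inc (v : V) (e : Sym2 V) : ℤ := (if v = e.inf then 1 else 0) - (if v = e.sup then 1 else 0)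

lemma esgn_mul_inc (v a b : V) (hab : a ≠ b) :
    esgn a b * inc v s(a, b) = (if v = a then 1 else 0) - (if v = b then 1 else 0) := by
  rcases le_or_gt a b with h | h
  · have h1 : (s(a,b) : Sym2 V).inf = a := by simp [Sym2.inf_mk, inf_eq_left.2 h]
    have h2 : (s(a,b) : Sym2 V).sup = b := by simp [Sym2.sup_mk, sup_eq_right.2 h]
    simp [esgn, inc, h1, h2, h]
  · have h1 : (s(a,b) : Sym2 V).inf = b := by simp [Sym2.inf_mk, inf_eq_right.2 h.le]
    have h2 : (s(a,b) : Sym2 V).sup = a := by simp [Sym2.sup_mk, sup_eq_left.2 h.le]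
    simp only [esgn, inc, h1, h2, if_neg (not_le.2 h)]
    ring

lemma inc_sq (v : V) (e : Sym2 V) (he : ¬ e.IsDiag) :
    inc v e * inc v e = if v ∈ e then 1 else 0 := by
  induction e with
  | _ a b =>
    have hab : a ≠ b := by simpa using he
    rcases le_or_gt a b with h | h
    · have h1 : (s(a,b) : Sym2 V).inf = a := by simp [Sym2.inf_mk, inf_eq_left.2 h]
      have h2 : (s(a,b) : Sym2 V).sup = b := by simp [Sym2.sup_mk, sup_eq_right.2 h]
      by_cases hva : v = a <;> by_cases hvb : v = b <;>
        simp_all [inc, Sym2.mem_iff]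
    · have h1 : (s(a,b) : Sym2 V).inf = b := by simp [Sym2.inf_mk, inf_eq_right.2 h.le]
      have h2 : (s(a,b) : Sym2 V).sup = a := by simp [Sym2.sup_mk, sup_eq_left.2 h.le]
      by_cases hva : v = a <;> by_cases hvb : v = b <;>
        simp_all [inc, Sym2.mem_iff]

lemma inc_mul_inc (v w : V) (hvw : v ≠ w) (e : Sym2 V) (he : ¬ e.IsDiag) :
    inc v e * inc w e = if v ∈ e ∧ w ∈ e then -1 else 0 := by
  induction e with
  | _ a b =>
    have hab : a ≠ b := by simpa using he
    rcases le_or_gt a b with h | h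
    · have h1 : (s(a,b) : Sym2 V).inf = a := by simp [Sym2.inf_mk, inf_eq_left.2 h]
      have h2 : (s(a,b) : Sym2 V).sup = b := by simp [Sym2.sup_mk, sup_eq_right.2 h]
      by_cases hva : v = a <;> by_cases hvb : v = b <;> by_cases hwa : w = a <;>
        by_cases hwb : w = b <;> simp_all [inc, Sym2.mem_iff]
    · have h1 : (s(a,b) : Sym2 V).inf = b := by simp [Sym2.inf_mk, inf_eq_right.2 h.le]
      have h2 : (s(a,b) : Sym2 V).sup = a := by simp [Sym2.sup_mk, sup_eq_left.2 h.le]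
      by_cases hva : v = a <;> by_cases hvb : v = b <;> by_cases hwa : w = a <;>
        by_cases hwb : w = b <;> simp_all [inc, Sym2.mem_iff]

variable [DecidableEq V]

/-- signed traversal-count vector of a walk -/
def wvec {G : SimpleGraph V} : ∀ {a b : V}, G.Walk a b → Sym2 V → ℤ
  | _, _, Walk.nil => fun _ => 0
  | a, _, Walk.cons (v := c) _ p => fun e => (if e = s(a, c) then esgn a c else 0) + wvec p e

lemma wvec_support {G : SimpleGraph V} : ∀ {a b : V} (p : G.Walk a b) (e : Sym2 V),
    wvec p e ≠ 0 → e ∈ p.edges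
  | _, _, Walk.nil, e => by simp [wvec]
  | a, _, Walk.cons (v := c) h p, e => by
    intro hne
    simp only [Walk.edges_cons, List.mem_cons]
    by_cases he : e = s(a, c)
    · exact Or.inl he
    · right
      refine wvec_support p e ?_
      simpa [wvec, he] using hne

lemma wvec_trail {G : SimpleGraph V} : ∀ {a b : V} (p : G.Walk a b), p.IsTrail →
    ∀ e ∈ p.edges, wvec p e ≠ 0
  | _, _, Walk.nil, _, e => by simp
  | a, _, Walk.cons (v := c) h p, ht, e => by
    intro he
    simp only [Walk.edges_cons, List.mem_cons] at he
    have ht' : p.IsTrail := ht.of_cons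
    by_cases hec : e = s(a, c)
    · subst hec
      have hnp : s(a, c) ∉ p.edges := ((Walk.isTrail_cons _ _).1 ht).2
      have hz : wvec p s(a, c) = 0 := by
        by_contra hz; exact hnp (wvec_support p _ hz)
      simp only [wvec, if_pos rfl, hz, add_zero]
      unfold esgn
      split_ifs <;> norm_num
    · simp only [wvec, if_neg hec, zero_add]
      exact wvec_trail p ht' e (he.resolve_left hec)

lemma wvec_tele [Fintype V] {G : SimpleGraph V} : ∀ {a b : V} (p : G.Walk a b) (v : V),
    (∑ e : Sym2 V, wvec p e * inc v e) =
      (if v = a then 1 else 0) - (if v = b then 1 else 0)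
  | _, _, Walk.nil, v => by simp [wvec]
  | a, _, Walk.cons (v := c) h p, v => by
    have IH := wvec_tele p v
    simp only [wvec, add_mul, Finset.sum_add_distrib, IH]
    have : (∑ e : Sym2 V, (if e = s(a, c) then esgn a c else 0) * inc v e)
        = esgn a c * inc v s(a, c) := by
      rw [Finset.sum_eq_single s(a, c)]
      · simp
      · intro e _ hne; simp [hne]
      · intro habs; exact absurd (Finset.mem_univ _) habs
    rw [this, esgn_mul_inc v a c h.ne]
    ring


section CB

variable {R : Type*} [CommRing R] {k : ℕ} {E : Type*} [Fintype E] [DecidableEq E]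

/-- an enumeration of a `k`-element finset -/
noncomputable def sel (S : {S : Finset E // S.card = k}) : Fin k → E :=
  fun i => ((S.1.equivFin.symm (finCongr S.2.symm i)) : E)

lemma sel_mem (S : {S : Finset E // S.card = k}) (i : Fin k) : sel S i ∈ S.1 :=
  (S.1.equivFin.symm _).2

lemma sel_injective (S : {S : Finset E // S.card = k}) : Function.Injective (sel S) := by
  intro i j h
  exact (finCongr S.2.symm).injective (S.1.equivFin.symm.injective (Subtype.ext h))

lemma sel_surj (S : {S : Finset E // S.card = k}) : ∀ e ∈ S.1, ∃ i, sel S i = e := by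
  intro e he
  refine ⟨finCongr S.2 (S.1.equivFin ⟨e, he⟩), ?_⟩
  simp [sel]

theorem cauchy_binet (A : Matrix (Fin k) E R) (B : Matrix E (Fin k) R) :
    (A * B).det = ∑ S : {S : Finset E // S.card = k},
      (A.submatrix id (sel S)).det * (B.submatrix (sel S) id).det := by
  classical
  have h1 : (A * B).det
      = ∑ f : Fin k → E, (∏ i, B (f i) i) * (A.submatrix id f).det := by
    rw [det_apply']
    have e1 : ∀ σ : Equiv.Perm (Fin k),
        ((Equiv.Perm.sign σ : ℤ) : R) * ∏ i, (A * B) (σ i) i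
        = ∑ f ∈ Fintype.piFinset (fun _ : Fin k => (univ : Finset E)),
            ((Equiv.Perm.sign σ : ℤ) : R) * ∏ i, (A (σ i) (f i) * B (f i) i) := by
      intro σ
      rw [← Finset.mul_sum]
      congr 1
      simp only [mul_apply]
      rw [Finset.prod_univ_sum]
    simp_rw [e1]
    rw [Finset.sum_comm]
    rw [Fintype.piFinset_univ]
    refine Finset.sum_congr rfl fun f _ => ?_
    rw [det_apply']
    simp only [submatrix_apply, id_eq]
    rw [Finset.mul_sum]
    refine Finset.sum_congr rfl fun σ _ => ?_
    rw [Finset.prod_mul_distrib]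
    ring
  have h2 : ∑ f : Fin k → E, (∏ i, B (f i) i) * (A.submatrix id f).det
      = ∑ f ∈ univ.filter (fun f : Fin k → E => Function.Injective f),
          (∏ i, B (f i) i) * (A.submatrix id f).det := by
    symm
    apply Finset.sum_subset (Finset.filter_subset _ _)
    intro f _ hf
    simp only [Finset.mem_filter, Finset.mem_univ, true_and] at hf
    obtain ⟨i, j, hij, hne⟩ : ∃ i j, f i = f j ∧ i ≠ j := by
      rw [Function.Injective] at hf
      push_neg at hf
      exact hf
    have : (A.submatrix id f).det = 0 :=
      det_zero_of_column_eq hne (fun x => by simp [submatrix_apply, hij])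
    rw [this, mul_zero]
  have key : ∀ (S : {S : Finset E // S.card = k}) (π : Equiv.Perm (Fin k)) (e : E),
      e ∈ S.1 ↔ ∃ i, sel S (π i) = e := by
    intro S π e
    constructor
    · intro he
      obtain ⟨j, hj⟩ := sel_surj S e he
      exact ⟨π.symm j, by simp [hj]⟩
    · rintro ⟨i, rfl⟩
      exact sel_mem _ _
  have h3 : ∑ f ∈ univ.filter (fun f : Fin k → E => Function.Injective f),
        (∏ i, B (f i) i) * (A.submatrix id f).det
      = ∑ p : {S : Finset E // S.card = k} × Equiv.Perm (Fin k),
          (∏ i, B (sel p.1 (p.2 i)) i) * (A.submatrix id (fun i => sel p.1 (p.2 i))).det := by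
    symm
    refine Finset.sum_bij (fun p _ => fun i => sel p.1 (p.2 i)) ?_ ?_ ?_ ?_
    · intro p _
      simp only [Finset.mem_filter, Finset.mem_univ, true_and]
      exact (sel_injective p.1).comp p.2.injective
    · rintro ⟨S, π⟩ _ ⟨S', π'⟩ _ hpq
      have hfun : ∀ x : Fin k, sel S (π x) = sel S' (π' x) := fun x => congrFun hpq x
      have hS : S = S' := by
        apply Subtype.ext
        apply Finset.ext
        intro e
        rw [show (e ∈ S.1 ↔ ∃ i, sel S (π i) = e) from key S π e,
          show (e ∈ S'.1 ↔ ∃ i, sel S' (π' i) = e) from key S' π' e]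
        constructor
        · rintro ⟨i, hi⟩
          exact ⟨i, by rw [← hfun i]; exact hi⟩
        · rintro ⟨i, hi⟩
          exact ⟨i, by rw [hfun i]; exact hi⟩
      subst hS
      have hπ : π = π' := Equiv.ext fun i => sel_injective S (hfun i)
      rw [hπ]
    · intro f hf
      simp only [Finset.mem_filter, Finset.mem_univ, true_and] at hf
      have hcard : (univ.image f).card = k := by
        rw [Finset.card_image_of_injective _ hf, Finset.card_univ, Fintype.card_fin]
      set S : {S : Finset E // S.card = k} := ⟨univ.image f, hcard⟩ with hSdef
      have hmem : ∀ i, f i ∈ S.1 := fun i => Finset.mem_image_of_mem f (Finset.mem_univ i)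
      have hbij : Function.Bijective (fun i => (⟨f i, hmem i⟩ : {x // x ∈ S.1})) := by
        rw [Fintype.bijective_iff_injective_and_card]
        constructor
        · intro i j hij
          exact hf (congrArg Subtype.val hij)
        · rw [Fintype.card_coe, S.2, Fintype.card_fin]
      let ef : Fin k ≃ {x // x ∈ S.1} := Equiv.ofBijective _ hbij
      let eS : Fin k ≃ {x // x ∈ S.1} := (finCongr S.2.symm).trans S.1.equivFin.symm
      refine ⟨⟨S, ef.trans eS.symm⟩, Finset.mem_univ _, ?_⟩
      funext i
      show sel S (eS.symm (ef i)) = f i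
      have hsel : ∀ j, sel S j = ((eS j : {x // x ∈ S.1}) : E) := fun j => rfl
      rw [hsel, Equiv.apply_symm_apply]
      rfl
    · intro p _
      rfl
  have h4 : ∀ (S : {S : Finset E // S.card = k}) (π : Equiv.Perm (Fin k)),
      (∏ i, B (sel S (π i)) i) * (A.submatrix id (fun i => sel S (π i))).det
      = (A.submatrix id (sel S)).det *
          (((Equiv.Perm.sign π : ℤ) : R) * ∏ i, (B.submatrix (sel S) id) (π i) i) := by
    intro S π
    have hs : (A.submatrix id (fun i => sel S (π i))) = (A.submatrix id (sel S)).submatrix id π :=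
      rfl
    rw [hs, det_permute']
    simp only [submatrix_apply, id_eq]
    ring
  rw [h1, h2, h3, Fintype.sum_prod_type]
  refine Finset.sum_congr rfl fun S _ => ?_
  rw [Finset.sum_congr rfl fun π _ => h4 S π, ← Finset.mul_sum]
  congr 1
  rw [det_apply']

end CB


lemma sym2_mk_inf_sup {α : Type*} [LinearOrder α] (e : Sym2 α) : s(e.inf, e.sup) = e := by
  induction e with
  | _ a b =>
    rcases le_total a b with h | h
    · rw [Sym2.inf_mk, Sym2.sup_mk, inf_eq_left.2 h, sup_eq_right.2 h]
    · rw [Sym2.inf_mk, Sym2.sup_mk, inf_eq_right.2 h, sup_eq_left.2 h, Sym2.eq_swap]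

section Graph

variable {m : ℕ} (G : SimpleGraph (Fin (m + 1))) [DecidableRel G.Adj]

/-- the full incidence matrix -/
def Nfull : Matrix (Fin (m + 1)) G.edgeSet ℤ := fun v e => inc v (e : Sym2 (Fin (m + 1)))

lemma lap_eq_inc_mul : G.lapMatrix ℤ = Nfull G * (Nfull G)ᵀ := by
  ext i j
  rw [mul_apply]
  by_cases hij : i = j
  · subst hij
    have hpt : ∀ e : G.edgeSet, Nfull G i e * (Nfull G)ᵀ e i
        = if i ∈ (e : Sym2 (Fin (m+1))) then 1 else 0 := fun e => by
      rw [show Nfull G i e * (Nfull G)ᵀ e i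
        = inc i (e : Sym2 (Fin (m+1))) * inc i (e : Sym2 (Fin (m+1))) from rfl,
        inc_sq i e (G.not_isDiag_of_mem_edgeSet e.2)]
    rw [Finset.sum_congr rfl fun e _ => hpt e,
      ← Finset.sum_subtype G.edgeFinset (fun e => mem_edgeFinset)
        (fun e => if i ∈ e then (1 : ℤ) else 0),
      Finset.sum_boole, ← incidenceFinset_eq_filter, card_incidenceFinset_eq_degree]
    simp [lapMatrix, degMatrix]
  · have hpt : ∀ e : G.edgeSet, Nfull G i e * (Nfull G)ᵀ e j
        = if i ∈ (e : Sym2 (Fin (m+1))) ∧ j ∈ (e : Sym2 (Fin (m+1))) then -1 else 0 := fun e => by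
      rw [show Nfull G i e * (Nfull G)ᵀ e j
        = inc i (e : Sym2 (Fin (m+1))) * inc j (e : Sym2 (Fin (m+1))) from rfl,
        inc_mul_inc i j hij e (G.not_isDiag_of_mem_edgeSet e.2)]
    rw [Finset.sum_congr rfl fun e _ => hpt e,
      ← Finset.sum_subtype G.edgeFinset (fun e => mem_edgeFinset)
        (fun e => if i ∈ e ∧ j ∈ e then (-1 : ℤ) else 0),
      Finset.sum_congr rfl (fun e _ => if_congr (Sym2.mem_and_mem_iff hij) rfl rfl),
      Finset.sum_ite_eq' G.edgeFinset s(i,j) (fun _ => (-1 : ℤ))]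
    by_cases hadj : G.Adj i j <;>
      simp [lapMatrix, degMatrix, Matrix.diagonal_apply_ne _ hij, hadj, mem_edgeFinset]

/-- the graph spanned by a set of edges of `G` -/
def HS (S : Finset G.edgeSet) : SimpleGraph (Fin (m + 1)) :=
  fromEdgeSet (S.image Subtype.val : Finset (Sym2 (Fin (m + 1))))

lemma HS_edgeSet (S : Finset G.edgeSet) :
    (HS G S).edgeSet = (S.image Subtype.val : Finset (Sym2 (Fin (m + 1)))) := by
  rw [HS, edgeSet_fromEdgeSet]
  ext e
  constructor
  · rintro ⟨he, _⟩
    exact he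
  · intro he
    refine ⟨he, ?_⟩
    simp only [Finset.coe_image, Set.mem_image, Finset.mem_coe] at he
    obtain ⟨x, _, rfl⟩ := he
    exact G.not_isDiag_of_mem_edgeSet x.2

lemma HS_le (S : Finset G.edgeSet) : HS G S ≤ G := by
  have hsub : ((S.image Subtype.val : Finset (Sym2 (Fin (m+1)))) : Set (Sym2 (Fin (m+1))))
      ⊆ G.edgeSet := by
    rintro e he
    simp only [Finset.coe_image, Set.mem_image, Finset.mem_coe] at he
    obtain ⟨x, _, rfl⟩ := he
    exact x.2
  calc HS G S ≤ fromEdgeSet G.edgeSet := fromEdgeSet_mono hsub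
    _ = G := G.fromEdgeSet_edgeSet

/-- reduced incidence matrix of the subset `S` -/
noncomputable def BS (S : {S : Finset G.edgeSet // S.card = m}) : Matrix (Fin m) (Fin m) ℤ :=
  ((Nfull G).submatrix Fin.castSucc id).submatrix id (sel S)

lemma BS_apply (S : {S : Finset G.edgeSet // S.card = m}) (v j : Fin m) :
    BS G S v j = inc (Fin.castSucc v) ((sel S j : G.edgeSet) : Sym2 (Fin (m + 1))) := rfl

lemma sum_sel_eq_sum_sym2 (S : {S : Finset G.edgeSet // S.card = m})
    (f : Sym2 (Fin (m + 1)) → ℤ)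
    (hf : ∀ e, f e ≠ 0 → e ∈ (HS G S.1).edgeSet) :
    ∑ j : Fin m, f ((sel S j : G.edgeSet) : Sym2 (Fin (m + 1)))
      = ∑ e : Sym2 (Fin (m + 1)), f e := by
  have h1 : ∑ j : Fin m, f ((sel S j : G.edgeSet) : Sym2 (Fin (m + 1)))
      = ∑ x ∈ S.1, f (x : Sym2 (Fin (m + 1))) := by
    refine Finset.sum_bij (fun j _ => sel S j) (fun j _ => sel_mem S j) ?_ ?_ (fun j _ => rfl)
    · intro a _ b _ hab
      exact sel_injective S hab
    · intro x hx
      obtain ⟨j, hj⟩ := sel_surj S x hx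
      exact ⟨j, Finset.mem_univ j, hj⟩
  have h2 : ∑ x ∈ S.1, f (x : Sym2 (Fin (m + 1)))
      = ∑ e ∈ S.1.image Subtype.val, f e :=
    (Finset.sum_image (fun x _ y _ h => Subtype.ext h)).symm
  rw [h1, h2]
  refine Finset.sum_subset (Finset.subset_univ _) ?_
  intro e _ he
  by_contra hne
  have := hf e hne
  rw [HS_edgeSet] at this
  exact he (by simpa using this)

lemma row_sums (S : {S : Finset G.edgeSet // S.card = m}) {a b : Fin (m + 1)}
    (p : (HS G S.1).Walk a b) (v : Fin m) :
    ∑ j : Fin m, BS G S v j * wvec p ((sel S j : G.edgeSet) : Sym2 (Fin (m + 1)))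
      = (if Fin.castSucc v = a then 1 else 0) - (if Fin.castSucc v = b then 1 else 0) := by
  have hsupp : ∀ e, wvec p e * inc (Fin.castSucc v) e ≠ 0 → e ∈ (HS G S.1).edgeSet := by
    intro e he
    have : wvec p e ≠ 0 := fun h => he (by rw [h, zero_mul])
    exact p.edges_subset_edgeSet (wvec_support p e this)
  calc ∑ j : Fin m, BS G S v j * wvec p ((sel S j : G.edgeSet) : Sym2 (Fin (m + 1)))
      = ∑ j : Fin m, (fun e => wvec p e * inc (Fin.castSucc v) e)
          ((sel S j : G.edgeSet) : Sym2 (Fin (m + 1))) := by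
        refine Finset.sum_congr rfl fun j _ => ?_
        rw [BS_apply]
        ring
    _ = ∑ e : Sym2 (Fin (m + 1)), wvec p e * inc (Fin.castSucc v) e :=
        sum_sel_eq_sum_sym2 G S _ hsupp
    _ = _ := wvec_tele p (Fin.castSucc v)

lemma det_BS_sq_of_connected (S : {S : Finset G.edgeSet // S.card = m})
    (hconn : (HS G S.1).Connected) : (BS G S).det * (BS G S).det = 1 := by
  classical
  have hreach : ∀ v : Fin (m + 1), (HS G S.1).Reachable v (Fin.last m) :=
    fun v => hconn.preconnected v (Fin.last m)
  let p : ∀ v : Fin (m + 1), (HS G S.1).Walk v (Fin.last m) := fun v => (hreach v).some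
  let Y : Matrix (Fin m) (Fin m) ℤ := fun j w =>
    wvec (p (Fin.castSucc w)) ((sel S j : G.edgeSet) : Sym2 (Fin (m + 1)))
  have hY : BS G S * Y = 1 := by
    ext v w
    rw [mul_apply]
    have := row_sums G S (p (Fin.castSucc w)) v
    rw [this]
    have h1 : Fin.castSucc v ≠ Fin.last m := Fin.ne_last_of_lt (Fin.castSucc_lt_last v)
    rw [Matrix.one_apply]
    by_cases hvw : v = w
    · subst hvw
      simp [h1]
    · have : Fin.castSucc v ≠ Fin.castSucc w := by
        simpa [Fin.castSucc_inj] using hvw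
      simp [hvw, this, h1]
  have hdet := congrArg Matrix.det hY
  rw [Matrix.det_mul, Matrix.det_one] at hdet
  rcases Int.isUnit_iff.mp (IsUnit.of_mul_eq_one _ hdet) with h | h <;> rw [h] <;> norm_num

lemma det_BS_of_not_connected (S : {S : Finset G.edgeSet // S.card = m})
    (hconn : ¬ (HS G S.1).Connected) : (BS G S).det = 0 := by
  classical
  obtain ⟨u, hu⟩ : ∃ u, ¬ (HS G S.1).Reachable (Fin.last m) u := by
    by_contra h
    push_neg at h
    exact hconn (SimpleGraph.Connected.mk fun a b => (h a).symm.trans (h b))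
  have hur : u ≠ Fin.last m := fun h => hu (h ▸ Reachable.refl u)
  set x : Fin (m + 1) → ℤ := fun v =>
    if v = Fin.last m then 0 else if (HS G S.1).Reachable u v then 1 else 0 with hx
  have hadjx : ∀ a b : Fin (m + 1), (HS G S.1).Adj a b → x a = x b := by
    intro a b hab
    by_cases ha : a = Fin.last m
    · subst ha
      have hb : ¬ (HS G S.1).Reachable u b := fun hr =>
        hu (hr.trans hab.symm.reachable).symm
      have hbn : b ≠ Fin.last m := hab.ne'
      simp [hx, hb, hbn]
    · by_cases hb : b = Fin.last m
      · subst hb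
        have hA : ¬ (HS G S.1).Reachable u a := fun hr =>
          hu (hr.trans hab.reachable).symm
        simp [hx, hA, ha]
      · have hiff : (HS G S.1).Reachable u a ↔ (HS G S.1).Reachable u b :=
          ⟨fun h => h.trans hab.reachable, fun h => h.trans hab.symm.reachable⟩
        simp [hx, ha, hb, hiff]
  have hxsum : ∀ e : Sym2 (Fin (m + 1)), e ∈ (HS G S.1).edgeSet →
      (∑ w : Fin (m + 1), x w * inc w e) = 0 := by
    intro e he
    have h1 : (∑ w : Fin (m + 1), x w * inc w e) = x e.inf - x e.sup := by
      simp only [inc, mul_sub, Finset.sum_sub_distrib, mul_ite, mul_one, mul_zero]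
      rw [Finset.sum_ite_eq' Finset.univ e.inf x, Finset.sum_ite_eq' Finset.univ e.sup x]
      simp
    have hadj : (HS G S.1).Adj e.inf e.sup := by
      rw [← SimpleGraph.mem_edgeSet, sym2_mk_inf_sup]
      exact he
    rw [h1, hadjx _ _ hadj, sub_self]
  set z : Fin m → ℤ := fun i => x (Fin.castSucc i) with hz
  have hz0 : z ≠ 0 := by
    obtain ⟨i, hi⟩ := Fin.exists_castSucc_eq.mpr hur
    intro h
    have h2 := congrFun h i
    rw [hz] at h2
    simp only [hi, Pi.zero_apply] at h2
    rw [hx] at h2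
    simp [hur, Reachable.refl] at h2
  have hvm : z ᵥ* BS G S = 0 := by
    ext j
    have hmem : ((sel S j : G.edgeSet) : Sym2 (Fin (m + 1))) ∈ (HS G S.1).edgeSet := by
      rw [HS_edgeSet]
      exact Finset.mem_coe.mpr (Finset.mem_image_of_mem _ (sel_mem S j))
    have hfull : (z ᵥ* BS G S) j
        = ∑ w : Fin (m + 1), x w * inc w ((sel S j : G.edgeSet) : Sym2 (Fin (m + 1))) := by
      rw [Fin.sum_univ_castSucc
        (f := fun w => x w * inc w ((sel S j : G.edgeSet) : Sym2 (Fin (m + 1))))]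
      have hlast : x (Fin.last m) = 0 := by simp [hx]
      rw [hlast, zero_mul, add_zero]
      rfl
    rw [hfull, hxsum _ hmem]
    rfl
  exact Matrix.exists_vecMul_eq_zero_iff.mp ⟨z, hz0, hvm⟩

lemma HS_isAcyclic (S : {S : Finset G.edgeSet // S.card = m})
    (hconn : (HS G S.1).Connected) : (HS G S.1).IsAcyclic := by
  classical
  intro v c hc
  have hdet : (BS G S).det ≠ 0 := by
    intro h
    have := det_BS_sq_of_connected G S hconn
    rw [h, mul_zero] at this
    exact zero_ne_one this
  apply hdet
  rw [← Matrix.exists_mulVec_eq_zero_iff]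
  set z : Fin m → ℤ := fun j => wvec c ((sel S j : G.edgeSet) : Sym2 (Fin (m + 1))) with hzdef
  have hz0 : z ≠ 0 := by
    obtain ⟨e₀, he₀⟩ : ∃ e₀, e₀ ∈ c.edges := by
      cases c with
      | nil => exact absurd rfl hc.ne_nil
      | cons h q => exact ⟨_, List.mem_cons_self⟩
    have hmem : e₀ ∈ (HS G S.1).edgeSet := c.edges_subset_edgeSet he₀
    rw [HS_edgeSet] at hmem
    obtain ⟨xx, hxx, rfl⟩ := by
      simpa only [Finset.coe_image, Set.mem_image, Finset.mem_coe] using hmem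
    obtain ⟨j, hj⟩ := sel_surj S xx hxx
    intro h
    have h2 := congrFun h j
    rw [hzdef] at h2
    simp only [hj, Pi.zero_apply] at h2
    exact wvec_trail c hc.isCircuit.isTrail _ he₀ h2
  refine ⟨z, hz0, ?_⟩
  ext i
  have hsupp : ∀ e, wvec c e * inc (Fin.castSucc i) e ≠ 0 → e ∈ (HS G S.1).edgeSet := by
    intro e he
    have : wvec c e ≠ 0 := fun h0 => he (by rw [h0, zero_mul])
    exact c.edges_subset_edgeSet (wvec_support c e this)
  have : (BS G S *ᵥ z) i
      = ∑ j : Fin m, (fun e => wvec c e * inc (Fin.castSucc i) e)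
          ((sel S j : G.edgeSet) : Sym2 (Fin (m + 1))) := by
    simp only [Matrix.mulVec, dotProduct]
    refine Finset.sum_congr rfl fun j _ => ?_
    rw [hzdef, BS_apply]
    ring
  rw [this, sum_sel_eq_sum_sym2 G S _ hsupp, wvec_tele c (Fin.castSucc i), sub_self]
  rfl

end Graph

lemma iso_isAcyclic_of {α β : Type*} {A : SimpleGraph α} {B : SimpleGraph β} (e : A ≃g B)
    (hB : B.IsAcyclic) : A.IsAcyclic := fun _ c hc =>
  hB (c.map e.toHom) ((Walk.map_isCycle_iff_of_injective e.injective).mpr hc)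

lemma iso_isTree_iff {α β : Type*} {A : SimpleGraph α} {B : SimpleGraph β} (e : A ≃g B) :
    A.IsTree ↔ B.IsTree := by
  rw [isTree_iff, isTree_iff, e.connected_iff]
  exact and_congr Iff.rfl ⟨fun h => iso_isAcyclic_of e.symm h, fun h => iso_isAcyclic_of e h⟩

section Count

variable {m : ℕ} (G : SimpleGraph (Fin (m + 1))) [DecidableRel G.Adj]

lemma card_trees_eq :
    Nat.card {H : G.Subgraph // H.IsSpanning ∧ H.coe.IsTree}
      = Nat.card {S : {S : Finset G.edgeSet // S.card = m} // (HS G S.1).Connected} := by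
  classical
  have E1 : {H : G.Subgraph // H.IsSpanning ∧ H.coe.IsTree}
      ≃ {H' : SimpleGraph (Fin (m + 1)) // H' ≤ G ∧ H'.IsTree} := by
    refine ⟨fun H => ⟨H.1.spanningCoe, H.1.spanningCoe_le, ?_⟩,
      fun H' => ⟨SimpleGraph.toSubgraph H'.1 H'.2.1, SimpleGraph.toSubgraph.isSpanning _ _, ?_⟩,
      ?_, ?_⟩
    · exact (iso_isTree_iff (SimpleGraph.Subgraph.spanningCoeEquivCoeOfSpanning H.1 H.2.1)).mpr
        H.2.2
    · exact (iso_isTree_iff (SimpleGraph.Subgraph.spanningCoeEquivCoeOfSpanning _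
        (SimpleGraph.toSubgraph.isSpanning H'.1 H'.2.1))).mp H'.2.2
    · rintro ⟨H, hs, ht⟩
      apply Subtype.ext
      ext <;> simp [SimpleGraph.toSubgraph, hs _]
    · rintro ⟨H', hle, ht⟩
      rfl
  have himg : ∀ H' : SimpleGraph (Fin (m + 1)), H' ≤ G →
      Finset.image Subtype.val
        (Finset.univ.filter (fun e : G.edgeSet => (e : Sym2 (Fin (m+1))) ∈ H'.edgeSet))
        = H'.edgeFinset := by
    intro H' hle
    ext e
    simp only [Finset.mem_image, Finset.mem_filter, Finset.mem_univ, true_and,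
      mem_edgeFinset]
    constructor
    · rintro ⟨x, hx, rfl⟩
      exact hx
    · intro he
      exact ⟨⟨e, edgeSet_mono hle he⟩, he, rfl⟩
  have hcard : ∀ H' : {H' : SimpleGraph (Fin (m + 1)) // H' ≤ G ∧ H'.IsTree},
      (Finset.univ.filter
        (fun e : G.edgeSet => (e : Sym2 (Fin (m+1))) ∈ H'.1.edgeSet)).card = m := by
    intro H'
    have h1 : (Finset.image Subtype.val
        (Finset.univ.filter (fun e : G.edgeSet => (e : Sym2 (Fin (m+1))) ∈ H'.1.edgeSet))).card
        = H'.1.edgeFinset.card := by rw [himg H'.1 H'.2.1]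
    rw [Finset.card_image_of_injective _ Subtype.val_injective] at h1
    have h2 := H'.2.2.card_edgeFinset
    rw [Fintype.card_fin] at h2
    omega
  have hHS : ∀ H' : {H' : SimpleGraph (Fin (m + 1)) // H' ≤ G ∧ H'.IsTree},
      HS G (Finset.univ.filter
        (fun e : G.edgeSet => (e : Sym2 (Fin (m+1))) ∈ H'.1.edgeSet)) = H'.1 := by
    intro H'
    rw [HS, himg H'.1 H'.2.1, coe_edgeFinset, fromEdgeSet_edgeSet]
  let φ : {H' : SimpleGraph (Fin (m + 1)) // H' ≤ G ∧ H'.IsTree}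
      → {S : {S : Finset G.edgeSet // S.card = m} // (HS G S.1).Connected} :=
    fun H' => ⟨⟨Finset.univ.filter
        (fun e : G.edgeSet => (e : Sym2 (Fin (m+1))) ∈ H'.1.edgeSet), hcard H'⟩,
      by rw [show ((⟨Finset.univ.filter
          (fun e : G.edgeSet => (e : Sym2 (Fin (m+1))) ∈ H'.1.edgeSet), hcard H'⟩ :
            {S : Finset G.edgeSet // S.card = m}) : {S : Finset G.edgeSet // S.card = m}).1
          = Finset.univ.filter
            (fun e : G.edgeSet => (e : Sym2 (Fin (m+1))) ∈ H'.1.edgeSet) from rfl,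
        hHS H']
         exact H'.2.2.isConnected⟩
  have hφ : Function.Bijective φ := by
    constructor
    · intro H₁ H₂ h
      have h0 : (Finset.univ.filter
            (fun e : G.edgeSet => (e : Sym2 (Fin (m+1))) ∈ H₁.1.edgeSet))
          = (Finset.univ.filter
            (fun e : G.edgeSet => (e : Sym2 (Fin (m+1))) ∈ H₂.1.edgeSet)) :=
        congrArg (fun S => S.1.1) h
      have h' := congrArg (Finset.image Subtype.val) h0
      rw [himg H₁.1 H₁.2.1, himg H₂.1 H₂.2.1] at h'
      apply Subtype.ext
      rw [← edgeSet_inj, ← coe_edgeFinset, ← coe_edgeFinset, h']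
    · rintro ⟨S, hconn⟩
      refine ⟨⟨HS G S.1, HS_le G S.1, hconn, HS_isAcyclic G S hconn⟩, ?_⟩
      apply Subtype.ext
      apply Subtype.ext
      show Finset.univ.filter
          (fun e : G.edgeSet => (e : Sym2 (Fin (m+1))) ∈ (HS G S.1).edgeSet) = S.1
      ext x
      simp only [Finset.mem_filter, Finset.mem_univ, true_and]
      rw [HS_edgeSet]
      simp only [Finset.mem_coe, Finset.mem_image]
      constructor
      · rintro ⟨y, hy, hxy⟩
        rwa [← Subtype.ext hxy]
      · intro hx
        exact ⟨x, hx, rfl⟩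
  exact Nat.card_congr (E1.trans (Equiv.ofBijective φ hφ))

lemma det_L0_eq_card :
    ((G.lapMatrix ℤ).submatrix Fin.castSucc Fin.castSucc).det
      = (Nat.card {H : G.Subgraph // H.IsSpanning ∧ H.coe.IsTree} : ℤ) := by
  classical
  have hfac : (G.lapMatrix ℤ).submatrix Fin.castSucc Fin.castSucc
      = ((Nfull G).submatrix Fin.castSucc id) * ((Nfull G)ᵀ.submatrix id Fin.castSucc) := by
    ext i j
    rw [lap_eq_inc_mul]
    simp [mul_apply]
  rw [hfac, cauchy_binet]
  have hterm : ∀ S : {S : Finset G.edgeSet // S.card = m},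
      ((((Nfull G).submatrix Fin.castSucc id)).submatrix id (sel S)).det *
        (((Nfull G)ᵀ.submatrix id Fin.castSucc).submatrix (sel S) id).det
      = if (HS G S.1).Connected then 1 else 0 := by
    intro S
    have h1 : (((Nfull G)ᵀ.submatrix id Fin.castSucc).submatrix (sel S) id)
        = (BS G S)ᵀ := rfl
    have h2 : ((((Nfull G).submatrix Fin.castSucc id)).submatrix id (sel S)) = BS G S := rfl
    rw [h1, h2, Matrix.det_transpose]
    by_cases h : (HS G S.1).Connected
    · rw [if_pos h]
      exact det_BS_sq_of_connected G S h
    · rw [if_neg h, det_BS_of_not_connected G S h, mul_zero]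
  rw [Finset.sum_congr rfl fun S _ => hterm S, Finset.sum_boole, card_trees_eq]
  congr 1
  rw [Nat.card_eq_fintype_card, Fintype.card_subtype]

end Count

section Reduce

variable {m : ℕ} (G : SimpleGraph (Fin (m + 1))) [DecidableRel G.Adj]

lemma det_M_eq (A : Matrix (Fin (m + 1)) (Fin m) ℤ)
    (hA : ∀ (i : Fin (m + 1)) (j : Fin m), A i j = if (i : ℕ) ≤ (j : ℕ) then 1 else 0)
    (M : Matrix (Fin (m + 1)) (Fin (m + 1)) ℤ)
    (hM : ∀ (i : Fin (m + 1)) (j : Fin (m + 1)), M i j =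
      if h : (j : ℕ) < m then (G.lapMatrix ℤ * A) i ⟨j, h⟩ else 1) :
    M.det = (m + 1) * ((G.lapMatrix ℤ).submatrix Fin.castSucc Fin.castSucc).det := by
  classical
  set L := G.lapMatrix ℤ with hL
  set Mones : Matrix (Fin (m + 1)) (Fin (m + 1)) ℤ :=
    fun i j => if j = Fin.last m then 1 else L i j with hMones
  set A' : Matrix (Fin (m + 1)) (Fin (m + 1)) ℤ :=
    fun k j => if j = Fin.last m then (if k = Fin.last m then 1 else 0)
      else (if k ≤ j then 1 else 0) with hA'
  set P : Matrix (Fin (m + 1)) (Fin (m + 1)) ℤ :=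
    fun i k => if i = Fin.last m then 1 else if i = k then 1 else 0 with hP
  have hMfac : M = Mones * A' := by
    ext i j
    rw [hM, mul_apply]
    by_cases hj : j = Fin.last m
    · subst hj
      rw [dif_neg (by simp [Fin.val_last])]
      have hterm : ∀ k : Fin (m + 1), Mones i k * A' k (Fin.last m)
          = if k = Fin.last m then Mones i k else 0 := by
        intro k
        by_cases hk : k = Fin.last m <;> simp [hA', hk]
      rw [Finset.sum_congr rfl fun k _ => hterm k, Finset.sum_ite_eq' Finset.univ (Fin.last m)]
      simp [hMones]
    · have hj' : (j : ℕ) < m := by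
        have h1 : (j : ℕ) ≠ m := fun h => hj (Fin.ext (by simp [Fin.val_last, h]))
        have h2 := j.isLt
        omega
      rw [dif_pos hj', mul_apply]
      refine Finset.sum_congr rfl fun k _ => ?_
      rw [hA]
      by_cases hk : k = Fin.last m
      · subst hk
        have h3 : ¬ ((m : ℕ) ≤ (j : ℕ)) := by omega
        have h3' : ¬ ((Fin.last m : ℕ) ≤ (j : ℕ)) := by
          rw [Fin.val_last]
          omega
        have h4 : ¬ (Fin.last m ≤ j) := by
          rw [Fin.le_def]
          exact h3
        simp [hA', hj, h3, h3', h4, Fin.val_last]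
      · simp only [hMones, hA', if_neg hk, if_neg hj, Fin.le_def]
  have hA'det : A'.det = 1 := by
    have htri : A'.BlockTriangular id := by
      intro i j hij
      have hji : j < i := hij
      have hjn : j ≠ Fin.last m := by
        intro h
        rw [h] at hji
        exact absurd hji (not_lt.mpr (Fin.le_last i))
      simp [hA', hjn, not_le.mpr hji]
    rw [Matrix.det_of_upperTriangular htri]
    apply Finset.prod_eq_one
    intro i _
    by_cases hi : i = Fin.last m <;> simp [hA', hi]
  have hPdet : P.det = 1 := by
    have htri : P.BlockTriangular OrderDual.toDual := by
      intro i j hij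
      have hij' : i < j := hij
      have hin : i ≠ Fin.last m := by
        intro h
        rw [h] at hij'
        exact absurd hij' (not_lt.mpr (Fin.le_last j))
      simp [hP, hin, (ne_of_lt hij')]
    rw [Matrix.det_of_lowerTriangular P htri]
    apply Finset.prod_eq_one
    intro i _
    by_cases hi : i = Fin.last m <;> simp [hP, hi]
  have hcolsum : ∀ j : Fin (m + 1), (∑ k, L k j) = 0 := by
    intro j
    have hsym : ∀ k, L k j = L j k := by
      intro k
      have h := congrFun (congrFun (G.isSymm_lapMatrix (R := ℤ)) j) k
      rw [hL]
      exact h.symm ▸ rfl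
    have h0 := congrFun (G.lapMatrix_mulVec_const_eq_zero (R := ℤ)) j
    rw [mulVec, dotProduct] at h0
    simp only [mul_one, Pi.zero_apply] at h0
    calc (∑ k, L k j) = ∑ k, L j k := Finset.sum_congr rfl fun k _ => hsym k
      _ = 0 := h0
  have hPM : ∀ i j, (P * Mones) i j
      = if i = Fin.last m then (if j = Fin.last m then ((m : ℤ) + 1) else 0)
        else Mones i j := by
    intro i j
    rw [mul_apply]
    by_cases hi : i = Fin.last m
    · subst hi
      simp only [hP, if_pos rfl, one_mul]
      by_cases hj : j = Fin.last m
      · subst hj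
        have : ∀ k : Fin (m + 1), Mones k (Fin.last m) = 1 := fun k => by simp [hMones]
        rw [Finset.sum_congr rfl fun k _ => this k]
        simp [Finset.card_univ]
      · have : ∀ k : Fin (m + 1), Mones k j = L k j := fun k => by simp [hMones, hj]
        rw [Finset.sum_congr rfl fun k _ => this k, hcolsum j]
        simp [hj]
    · simp only [hP, if_neg hi, ite_mul, one_mul, zero_mul]
      rw [Finset.sum_ite_eq Finset.univ i (fun k => Mones k j)]
      simp
  have hdetPM : (P * Mones).det
      = ((m : ℤ) + 1) * (L.submatrix Fin.castSucc Fin.castSucc).det := by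
    rw [Matrix.det_succ_row (P * Mones) (Fin.last m)]
    rw [Finset.sum_eq_single (Fin.last m)]
    · rw [hPM]
      have hminor : (P * Mones).submatrix (Fin.last m).succAbove (Fin.last m).succAbove
          = L.submatrix Fin.castSucc Fin.castSucc := by
        ext i j
        rw [Fin.succAbove_last, submatrix_apply, hPM]
        have h1 : Fin.castSucc i ≠ Fin.last m := Fin.ne_last_of_lt (Fin.castSucc_lt_last i)
        have h2 : Fin.castSucc j ≠ Fin.last m := Fin.ne_last_of_lt (Fin.castSucc_lt_last j)
        simp [h1, h2, hMones]
      rw [hminor]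
      simp only [if_pos rfl, Fin.val_last]
      have hpow : ((-1 : ℤ)) ^ (m + m) = 1 := Even.neg_one_pow ⟨m, rfl⟩
      rw [hpow]
      simp only [if_true]
      ring
    · intro j _ hj
      rw [hPM]
      simp [hj]
    · intro h
      exact absurd (Finset.mem_univ _) h
  have hM1 : M.det = Mones.det * A'.det := by rw [hMfac, det_mul]
  have hPMones : (P * Mones).det = Mones.det := by rw [det_mul, hPdet, one_mul]
  rw [hM1, hA'det, mul_one, ← hPMones, hdetPM]

end Reduce

end MTaux


open MTaux in
/-- For a connected graph `G` on `n` vertices, `|det [L_B | 1]| = n·κ`, where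
`L_B = L·A`, `[L_B | 1]` appends a column of ones, and `κ` is the number of
spanning trees of `G`. -/
theorem abs_det_lapB_appended_ones {n : ℕ} (hn : 0 < n)
    (G : SimpleGraph (Fin n)) [DecidableRel G.Adj] (hG : G.Connected)
    (κ : ℕ) (hκ : κ = Nat.card {H : G.Subgraph // H.IsSpanning ∧ H.coe.IsTree})
    (A : Matrix (Fin n) (Fin (n - 1)) ℤ)
    (hA : ∀ i j, A i j = if (i : ℕ) ≤ (j : ℕ) then 1 else 0)
    (M : Matrix (Fin n) (Fin n) ℤ)
    (hM : ∀ i (j : Fin n), M i j =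
      if h : (j : ℕ) < n - 1 then (G.lapMatrix ℤ * A) i ⟨j, h⟩ else 1) :
    M.det.natAbs = n * κ := by
  obtain ⟨m, rfl⟩ : ∃ m, n = m + 1 := ⟨n - 1, (Nat.succ_pred_eq_of_pos hn).symm⟩
  have hdet := det_M_eq G A hA M hM
  rw [det_L0_eq_card] at hdet
  rw [hdet, hκ]
  rw [show ((m : ℤ) + 1) * (Nat.card {H : G.Subgraph // H.IsSpanning ∧ H.coe.IsTree} : ℤ)
      = (((m + 1) * Nat.card {H : G.Subgraph // H.IsSpanning ∧ H.coe.IsTree} : ℕ) : ℤ) by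
    push_cast
    ring]
  exact Int.natAbs_natCast _
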